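/- For every t ≥ 1, dim(M_t) = t. -/

import Mathlib

open SimpleGraph Function
open scoped Classical

/-- A set `S` is a resolving set of `G`: every pair of distinct vertices differ in
distance to some element of `S`. -/
def IsResolving {V : Type*} (G : SimpleGraph V) (S : Set V) : Prop :=
  ∀ x y : V, x ≠ y → ∃ s ∈ S, G.dist s x ≠ G.dist s y

/-- A fault-tolerant resolving set: removing any single vertex leaves a resolving set. -/
def IsFTResolving {V : Type*} (G : SimpleGraph V) (S : Set V) : Prop :=
  ∀ s ∈ S, IsResolving G (S \ {s})

/-- The metric dimension of `G`. -/
noncomputable def metricDim {V : Type*} [Fintype V] (G : SimpleGraph V) : ℕ :=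
  sInf {n | ∃ S : Finset V, IsResolving G ↑S ∧ S.card = n}

/-- The fault-tolerant metric dimension of `G`. -/
noncomputable def ftDim {V : Type*} [Fintype V] (G : SimpleGraph V) : ℕ :=
  sInf {n | ∃ S : Finset V, IsFTResolving G ↑S ∧ S.card = n}

/-- `S` is a `k`-resolving set: every pair of distinct vertices is distinguished
by at least `k` vertices of `S`. -/
def IsKResolving {V : Type*} [Fintype V] (G : SimpleGraph V) (k : ℕ) (S : Finset V) : Prop :=
  ∀ x y : V, x ≠ y → k ≤ (S.filter (fun s => G.dist s x ≠ G.dist s y)).card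

/-- The `k`-metric dimension of `G`. -/
noncomputable def kMetricDim {V : Type*} [Fintype V] (G : SimpleGraph V) (k : ℕ) : ℕ :=
  sInf {n | ∃ S : Finset V, IsKResolving G k S ∧ S.card = n}

/-- The graph `M_t`: a clique on all binary strings of length `t`, together with
independent vertices `v_1, …, v_t`, where `v_i` is adjacent to exactly those strings
having `1` (`true`) at coordinate `i`. -/
def Mt (t : ℕ) : SimpleGraph ((Fin t → Bool) ⊕ Fin t) where
  Adj x y :=
    match x, y with
    | Sum.inl u, Sum.inl v => u ≠ v
    | Sum.inl u, Sum.inr i => u i = true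
    | Sum.inr i, Sum.inl u => u i = true
    | Sum.inr _, Sum.inr _ => False
  symm := by
    constructor
    rintro (u | i) (v | j) h
    · exact h.symm
    · exact h
    · exact h
    · exact h
  loopless := by
    constructor
    rintro (u | i) h
    · exact h rfl
    · exact h

lemma Mt_adj_inl_inl {t : ℕ} {u v : Fin t → Bool} : (Mt t).Adj (Sum.inl u) (Sum.inl v) ↔ u ≠ v :=
  Iff.rfl

lemma Mt_adj_inr_inl {t : ℕ} {i : Fin t} {u : Fin t → Bool} :
    (Mt t).Adj (Sum.inr i) (Sum.inl u) ↔ u i = true := Iff.rfl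

lemma Mt_dist_inl_inl {t : ℕ} (w u : Fin t → Bool) :
    (Mt t).dist (Sum.inl w) (Sum.inl u) = if u = w then 0 else 1 := by
  by_cases h : u = w
  · simp [h, SimpleGraph.dist_self]
  · rw [if_neg h]
    exact SimpleGraph.dist_eq_one_iff_adj.mpr (fun he => h he.symm)

lemma Mt_dist_inr_inl {t : ℕ} (i : Fin t) (u : Fin t → Bool) :
    (Mt t).dist (Sum.inr i) (Sum.inl u) = if u i = true then 1 else 2 := by
  by_cases h : u i = true
  · rw [if_pos h]
    exact SimpleGraph.dist_eq_one_iff_adj.mpr h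
  · rw [if_neg h]
    set w : Fin t → Bool := Function.update u i true with hw
    have hwi : w i = true := Function.update_self i true u
    have hwu : w ≠ u := fun he => by rw [he] at hwi; exact h hwi
    have h1 : (Mt t).Adj (Sum.inr i) (Sum.inl w) := hwi
    have h2 : (Mt t).Adj (Sum.inl w) (Sum.inl u) := hwu
    let p : (Mt t).Walk (Sum.inr i) (Sum.inl u) :=
      SimpleGraph.Walk.cons h1 (SimpleGraph.Walk.cons h2 SimpleGraph.Walk.nil)
    have hle : (Mt t).dist (Sum.inr i) (Sum.inl u) ≤ 2 := by
      simpa [p] using SimpleGraph.dist_le p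
    have hpos : 0 < (Mt t).dist (Sum.inr i) (Sum.inl u) :=
      SimpleGraph.Reachable.pos_dist_of_ne ⟨p⟩ (by simp)
    have hne1 : (Mt t).dist (Sum.inr i) (Sum.inl u) ≠ 1 := by
      intro h1'
      exact h (SimpleGraph.dist_eq_one_iff_adj.mp h1')
    omega

lemma Mt_dist_inr_inr {t : ℕ} (i j : Fin t) (hij : i ≠ j) :
    (Mt t).dist (Sum.inr i) (Sum.inr j) = 2 := by
  set w : Fin t → Bool := fun _ => true with hw
  have h1 : (Mt t).Adj (Sum.inr i) (Sum.inl w) := rfl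
  have h2 : (Mt t).Adj (Sum.inl w) (Sum.inr j) := rfl
  let p : (Mt t).Walk (Sum.inr i) (Sum.inr j) :=
    SimpleGraph.Walk.cons h1 (SimpleGraph.Walk.cons h2 SimpleGraph.Walk.nil)
  have hle : (Mt t).dist (Sum.inr i) (Sum.inr j) ≤ 2 := by
    simpa [p] using SimpleGraph.dist_le p
  have hpos : 0 < (Mt t).dist (Sum.inr i) (Sum.inr j) :=
    SimpleGraph.Reachable.pos_dist_of_ne ⟨p⟩ (by simp [hij])
  have hne1 : (Mt t).dist (Sum.inr i) (Sum.inr j) ≠ 1 := by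
    intro h1'
    exact SimpleGraph.dist_eq_one_iff_adj.mp h1'
  omega

lemma Mt_resolving (t : ℕ) :
    IsResolving (Mt t) ↑(Finset.univ.image (Sum.inr : Fin t → (Fin t → Bool) ⊕ Fin t)) := by
  intro x y hxy
  have mem : ∀ i : Fin t, (Sum.inr i : (Fin t → Bool) ⊕ Fin t) ∈
      ↑(Finset.univ.image (Sum.inr : Fin t → (Fin t → Bool) ⊕ Fin t)) := by
    intro i; simp
  match x, y with
  | Sum.inl u, Sum.inl v =>
    have huv : u ≠ v := fun h => hxy (by rw [h])
    obtain ⟨i, hi⟩ := Function.ne_iff.mp huv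
    refine ⟨Sum.inr i, mem i, ?_⟩
    rw [Mt_dist_inr_inl, Mt_dist_inr_inl]
    cases hu : u i <;> cases hv : v i <;> simp_all
  | Sum.inl u, Sum.inr j =>
    refine ⟨Sum.inr j, mem j, ?_⟩
    rw [Mt_dist_inr_inl, SimpleGraph.dist_self]
    split <;> omega
  | Sum.inr j, Sum.inl u =>
    refine ⟨Sum.inr j, mem j, ?_⟩
    rw [Mt_dist_inr_inl, SimpleGraph.dist_self]
    split <;> omega
  | Sum.inr i, Sum.inr j =>
    have hij : i ≠ j := fun h => hxy (by rw [h])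
    refine ⟨Sum.inr i, mem i, ?_⟩
    rw [SimpleGraph.dist_self, Mt_dist_inr_inr i j hij]
    omega

lemma Mt_lower {t : ℕ} (S : Finset ((Fin t → Bool) ⊕ Fin t))
    (hS : IsResolving (Mt t) ↑S) : t ≤ S.card := by
  -- encode each string by its "signature" on S
  set b : ((Fin t → Bool) ⊕ Fin t) → (Fin t → Bool) → Bool :=
    fun s u => match s with
    | Sum.inl w => decide (u = w)
    | Sum.inr i => u i with hb
  have key : ∀ s : ((Fin t → Bool) ⊕ Fin t), ∀ u v : Fin t → Bool,
      b s u = b s v → (Mt t).dist s (Sum.inl u) = (Mt t).dist s (Sum.inl v) := by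
    rintro (w | i) u v h
    · rw [Mt_dist_inl_inl, Mt_dist_inl_inl]
      simp only [hb, decide_eq_decide] at h
      simp [h]
    · rw [Mt_dist_inr_inl, Mt_dist_inr_inl]
      simp only [hb] at h
      rw [h]
  have hinj : Function.Injective (fun u : Fin t → Bool => fun s : ↥S => b s.val u) := by
    intro u v huv
    by_contra hne
    obtain ⟨s, hs, hd⟩ := hS (Sum.inl u) (Sum.inl v) (by simp [hne])
    have hbs : b s u = b s v := congrFun huv ⟨s, hs⟩
    exact hd (key s u v hbs)
  have hcard := Fintype.card_le_of_injective _ hinj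
  simp only [Fintype.card_fun, Fintype.card_bool, Fintype.card_fin,
    Fintype.card_coe] at hcard
  exact (Nat.pow_le_pow_iff_right (le_refl 2)).mp hcard

theorem stmt10 (t : ℕ) (ht : 1 ≤ t) : metricDim (Mt t) = t := by
  have hmem : t ∈ {n | ∃ S : Finset ((Fin t → Bool) ⊕ Fin t),
      IsResolving (Mt t) ↑S ∧ S.card = n} := by
    refine ⟨Finset.univ.image Sum.inr, Mt_resolving t, ?_⟩
    rw [Finset.card_image_of_injective _ Sum.inr_injective, Finset.card_univ, Fintype.card_fin]
  apply le_antisymm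
  · exact Nat.sInf_le hmem
  · refine le_csInf ⟨t, hmem⟩ ?_
    rintro n ⟨S, hS, rfl⟩
    exact Mt_lower S hS
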